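/- Let (A, E) be an E-finite Jordan-Hölder exact category and X ↣ Z ↠ Y an admissible short exact sequence of objects of finite E-length. Then the Jordan-Hölder lengths satisfy l_E(Z) = l_E(X) + l_E(Y). Moreover l_E is a length function: if X is an E-subobject of Y then l_E(X) ≤ l_E(Y). -/

import Mathlib

open CategoryTheory CategoryTheory.Limits

universe v u

variable {C : Type u} [Category.{v} C] [Preadditive C]

/-- `(i, d)` is a kernel-cokernel pair. -/
structure IsKernelCokernelPair {A B X : C} (i : A ⟶ B) (d : B ⟶ X) : Prop where
  w : i ≫ d = 0
  isKernel : Nonempty (IsLimit (KernelFork.ofι i w))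
  isCokernel : Nonempty (IsColimit (CokernelCofork.ofπ d w))

/-- A Quillen exact structure on an additive category. -/
structure ExactStructure (C : Type u) [Category.{v} C] [Preadditive C] :
    Type (max u v) where
  E : ∀ ⦃A B X : C⦄, (A ⟶ B) → (B ⟶ X) → Prop
  pair : ∀ ⦃A B X : C⦄ {i : A ⟶ B} {d : B ⟶ X}, E i d → IsKernelCokernelPair i d
  iso_closed : ∀ ⦃A B X A' B' X' : C⦄ {i : A ⟶ B} {d : B ⟶ X} {i' : A' ⟶ B'} {d' : B' ⟶ X'}
      (eA : A ≅ A') (eB : B ≅ B') (eX : X ≅ X'),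
      E i d → i ≫ eB.hom = eA.hom ≫ i' → d ≫ eX.hom = eB.hom ≫ d' → E i' d'
  admMono_id : ∀ A : C, ∃ (X : C) (d : A ⟶ X), E (𝟙 A) d
  admEpi_id : ∀ A : C, ∃ (X : C) (i : X ⟶ A), E i (𝟙 A)
  admMono_comp : ∀ ⦃A B D : C⦄ (f : A ⟶ B) (g : B ⟶ D),
      (∃ (X : C) (d : B ⟶ X), E f d) → (∃ (X : C) (d : D ⟶ X), E g d) →
      ∃ (X : C) (d : D ⟶ X), E (f ≫ g) d
  admEpi_comp : ∀ ⦃A B D : C⦄ (f : A ⟶ B) (g : B ⟶ D),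
      (∃ (X : C) (i : X ⟶ A), E i f) → (∃ (X : C) (i : X ⟶ B), E i g) →
      ∃ (X : C) (i : X ⟶ A), E i (f ≫ g)
  pushout_admMono : ∀ ⦃A B Z : C⦄ (i : A ⟶ B) (f : A ⟶ Z),
      (∃ (X : C) (d : B ⟶ X), E i d) →
      ∃ (D : C) (g : B ⟶ D) (j : Z ⟶ D) (w : i ≫ g = f ≫ j),
        Nonempty (IsColimit (PushoutCocone.mk g j w)) ∧ ∃ (X : C) (d : D ⟶ X), E j d
  pullback_admEpi : ∀ ⦃B D Z : C⦄ (h : B ⟶ D) (g : Z ⟶ D),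
      (∃ (X : C) (i : X ⟶ B), E i h) →
      ∃ (A : C) (f : A ⟶ B) (k : A ⟶ Z) (w : f ≫ h = k ≫ g),
        Nonempty (IsLimit (PullbackCone.mk f k w)) ∧ ∃ (X : C) (i : X ⟶ A), E i k

namespace ExactStructure

variable (Ex : ExactStructure C)

/-- `i` is an admissible monic. -/
def AdmMono {A B : C} (i : A ⟶ B) : Prop := ∃ (X : C) (d : B ⟶ X), Ex.E i d

/-- `d` is an admissible epic. -/
def AdmEpi {B X : C} (d : B ⟶ X) : Prop := ∃ (A : C) (i : A ⟶ B), Ex.E i d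

/-- `f` is admissible: it factors as an admissible epic followed by an admissible monic. -/
def Admissible {A B : C} (f : A ⟶ B) : Prop :=
  ∃ (Z : C) (e : A ⟶ Z) (m : Z ⟶ B), Ex.AdmEpi e ∧ Ex.AdmMono m ∧ e ≫ m = f

/-- `E` consists of all kernel-cokernel pairs. -/
def IsMaximalAll : Prop :=
  ∀ ⦃A B X : C⦄ (i : A ⟶ B) (d : B ⟶ X), IsKernelCokernelPair i d → Ex.E i d

/-- `S` is `E`-simple. -/
def ESimple (S : C) : Prop :=
  ¬ IsZero S ∧ ∀ ⦃A : C⦄ (i : A ⟶ S), Ex.AdmMono i → IsZero A ∨ IsIso i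

end ExactStructure

/-- `A` is abelian: it has finite products, kernels, cokernels, every mono is normal
and every epi is normal. -/
def IsAbelianCat (C : Type u) [Category.{v} C] [Preadditive C] : Prop :=
  HasFiniteProducts C ∧ HasKernels C ∧ HasCokernels C ∧
  (∀ ⦃X Y : C⦄ (f : X ⟶ Y), Mono f → Nonempty (NormalMono f)) ∧
  (∀ ⦃X Y : C⦄ (f : X ⟶ Y), Epi f → Nonempty (NormalEpi f))

/-- An admissible (`E`-)subobject of `X`. -/
structure ESub (Ex : ExactStructure C) (X : C) where
  obj : C
  ι : obj ⟶ X
  adm : Ex.AdmMono ι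

/-- The order on `E`-subobjects of `X`. -/
def ESubLe (Ex : ExactStructure C) {X : C} (s t : ESub Ex X) : Prop :=
  ∃ h : s.obj ⟶ t.obj, Ex.AdmMono h ∧ h ≫ t.ι = s.ι

/-- Two `E`-subobjects are isomorphic as subobjects. -/
def ESubEquiv (Ex : ExactStructure C) {X : C} (s t : ESub Ex X) : Prop :=
  ESubLe Ex s t ∧ ESubLe Ex t s

/-- The admissible intersection axiom (AI). -/
def AIAxiom (Ex : ExactStructure C) : Prop :=
  ∀ ⦃B Z D : C⦄ (g : B ⟶ D) (j : Z ⟶ D), Ex.AdmMono g → Ex.AdmMono j →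
    ∃ (A : C) (f : A ⟶ B) (f' : A ⟶ Z) (w : f ≫ g = f' ≫ j),
      Ex.AdmMono f ∧ Ex.AdmMono f' ∧ Nonempty (IsLimit (PullbackCone.mk f f' w))

/-- The admissible sum axiom (AS): for every pullback square of admissible monics,
the induced map from the pushout to the common codomain is an admissible monic. -/
def ASAxiom (Ex : ExactStructure C) : Prop :=
  ∀ ⦃A B Z D : C⦄ (f : A ⟶ B) (f' : A ⟶ Z) (g : B ⟶ D) (j : Z ⟶ D) (w : f ≫ g = f' ≫ j),
    Ex.AdmMono f → Ex.AdmMono f' → Ex.AdmMono g → Ex.AdmMono j →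
    IsLimit (PullbackCone.mk f f' w) →
    ∀ ⦃P : C⦄ (l : B ⟶ P) (k : Z ⟶ P) (w' : f ≫ l = f' ≫ k),
      IsColimit (PushoutCocone.mk l k w') →
      ∀ u : P ⟶ D, l ≫ u = g → k ≫ u = j → Ex.AdmMono u

/-- An AIS-category: an AI-category satisfying the admissible sum axiom. -/
def AISCat (Ex : ExactStructure C) : Prop := AIAxiom Ex ∧ ASAxiom Ex

/-- `f` is a kernel of some morphism. -/
def IsKernelMor {A B : C} (f : A ⟶ B) : Prop :=
  ∃ (Z : C) (g : B ⟶ Z) (w : f ≫ g = 0), Nonempty (IsLimit (KernelFork.ofι f w))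

/-- `f` is a cokernel of some morphism. -/
def IsCokernelMor {A B : C} (f : A ⟶ B) : Prop :=
  ∃ (Z : C) (g : Z ⟶ A) (w : g ≫ f = 0), Nonempty (IsColimit (CokernelCofork.ofπ f w))

/-- A quasi-abelian category: pre-abelian, kernels are stable under pushout and
cokernels are stable under pullback. -/
def IsQuasiAbelian (C : Type u) [Category.{v} C] [Preadditive C] : Prop :=
  HasKernels C ∧ HasCokernels C ∧
  (∀ ⦃A B Z : C⦄ (f : A ⟶ B) (t : A ⟶ Z), IsKernelMor f →
    ∀ ⦃P : C⦄ (s : B ⟶ P) (s' : Z ⟶ P) (w : f ≫ s = t ≫ s'),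
      IsColimit (PushoutCocone.mk s s' w) → IsKernelMor s') ∧
  (∀ ⦃A B Z : C⦄ (f : B ⟶ A) (t : Z ⟶ A), IsCokernelMor f →
    ∀ ⦃P : C⦄ (s : P ⟶ B) (s' : P ⟶ Z) (w : s ≫ f = s' ≫ t),
      IsLimit (PullbackCone.mk s s' w) → IsCokernelMor s')

/-- An `E`-composition series of length `n` for `X`. -/
structure CompSeries (Ex : ExactStructure C) (X : C) (n : ℕ) where
  obj : Fin (n + 1) → C
  map : ∀ i : Fin n, obj i.castSucc ⟶ obj i.succ
  zero : IsZero (obj 0)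
  top : obj (Fin.last n) ≅ X
  adm : ∀ i : Fin n, Ex.AdmMono (map i)
  simpleFactor : ∀ i : Fin n,
    ∃ (Q : C) (d : obj i.succ ⟶ Q), Ex.E (map i) d ∧ Ex.ESimple Q

/-- Two composition series are equivalent: there is a bijection of indices matching
isomorphic composition factors. -/
def CompSeries.EquivSeries {Ex : ExactStructure C} {X : C} {n m : ℕ}
    (s : CompSeries Ex X n) (t : CompSeries Ex X m) : Prop :=
  ∃ σ : Fin n ≃ Fin m, ∀ (i : Fin n) ⦃Q Q' : C⦄
    (d : s.obj i.succ ⟶ Q) (d' : t.obj (σ i).succ ⟶ Q'),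
    Ex.E (s.map i) d → Ex.E (t.map (σ i)) d' → Nonempty (Q ≅ Q')

/-- The Jordan-Hölder property for an exact structure. -/
def JordanHolder (Ex : ExactStructure C) : Prop :=
  ∀ (X : C) (n m : ℕ) (s : CompSeries Ex X n) (t : CompSeries Ex X m),
    n = m ∧ s.EquivSeries t

/-- A maximal `E`-subobject: one with `E`-simple cokernel. -/
def ESub.IsMax {Ex : ExactStructure C} {X : C} (A : ESub Ex X) : Prop :=
  ∃ (Q : C) (d : X ⟶ Q), Ex.E A.ι d ∧ Ex.ESimple Q

/-- `Y` belongs to the generalized intersection `Int_X(A, B)`: it is a maximal common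
`E`-subobject of `A` and `B`. -/
def InInt {Ex : ExactStructure C} {X : C} (A B Y : ESub Ex X) : Prop :=
  ESubLe Ex Y A ∧ ESubLe Ex Y B ∧
  ∀ Z : ESub Ex X, ESubLe Ex Z A → ESubLe Ex Z B → ESubLe Ex Y Z → ESubLe Ex Z Y

/-- A diamond exact category. -/
def DiamondCat (Ex : ExactStructure C) : Prop :=
  ∀ (X : C) (A B : ESub Ex X), A.IsMax → B.IsMax → ¬ ESubEquiv Ex A B →
    ∀ Y : ESub Ex X, InInt A B Y →
      (∀ (h : Y.obj ⟶ A.obj), Ex.AdmMono h → h ≫ A.ι = Y.ι →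
        ∀ ⦃Q : C⦄ (d : A.obj ⟶ Q), Ex.E h d → Ex.ESimple Q) ∧
      (∀ (h : Y.obj ⟶ B.obj), Ex.AdmMono h → h ≫ B.ι = Y.ι →
        ∀ ⦃Q : C⦄ (d : B.obj ⟶ Q), Ex.E h d → Ex.ESimple Q) ∧
      (∀ (hA : Y.obj ⟶ A.obj) (hB : Y.obj ⟶ B.obj), Ex.AdmMono hA → Ex.AdmMono hB →
        hA ≫ A.ι = Y.ι → hB ≫ B.ι = Y.ι →
        ∀ ⦃QXA QAY QXB QBY : C⦄
          (dXA : X ⟶ QXA) (dAY : A.obj ⟶ QAY) (dXB : X ⟶ QXB) (dBY : B.obj ⟶ QBY),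
          Ex.E A.ι dXA → Ex.E hA dAY → Ex.E B.ι dXB → Ex.E hB dBY →
          (Nonempty (QXA ≅ QXB) ∧ Nonempty (QAY ≅ QBY)) ∨
          (Nonempty (QXA ≅ QBY) ∧ Nonempty (QAY ≅ QXB)))

section AuxJH

variable (Ex : ExactStructure C)

lemma aux_E_conj {A A' B B' Q : C} {i : A ⟶ B} {d : B ⟶ Q} (h : Ex.E i d)
    (eA : A' ≅ A) (eB : B ≅ B') :
    Ex.E (eA.hom ≫ i ≫ eB.hom) (eB.inv ≫ d) :=
  Ex.iso_closed eA.symm eB (Iso.refl Q) h (by simp) (by simp)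

/-- Transfer a composition series along an isomorphism of the top object. -/
def auxTransfer {X X' : C} (e : X ≅ X') {n : ℕ} (s : CompSeries Ex X n) :
    CompSeries Ex X' n where
  obj := s.obj
  map := s.map
  zero := s.zero
  top := s.top ≪≫ e
  adm := s.adm
  simpleFactor := s.simpleFactor

/-- Truncate a composition series, dropping the top object. -/
def auxTrunc {Y : C} {m : ℕ} (t : CompSeries Ex Y (m + 1)) :
    CompSeries Ex (t.obj (Fin.last m).castSucc) m where
  obj i := t.obj i.castSucc
  map i := t.map i.castSucc
  zero := t.zero.of_iso (eqToIso (by simp))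
  top := Iso.refl _
  adm i := t.adm i.castSucc
  simpleFactor i := t.simpleFactor i.castSucc

/-- Extend a composition series by one admissible mono with simple cokernel. -/
def auxSnoc {X Z Q : C} {n : ℕ} (s : CompSeries Ex X n) (f : X ⟶ Z) (d : Z ⟶ Q)
    (hE : Ex.E f d) (hQ : Ex.ESimple Q) : CompSeries Ex Z (n + 1) where
  obj := Fin.snoc s.obj Z
  map i := Fin.lastCases (motive := fun i : Fin (n + 1) =>
      (Fin.snoc s.obj Z : Fin (n + 2) → C) i.castSucc ⟶
        (Fin.snoc s.obj Z : Fin (n + 2) → C) i.succ)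
    (eqToHom (by rw [Fin.snoc_castSucc]) ≫ s.top.hom ≫ f ≫
      eqToHom (by simp [Fin.succ_last]))
    (fun j => eqToHom (by rw [Fin.snoc_castSucc]) ≫ s.map j ≫
      eqToHom (by simp [Fin.succ_castSucc, -Fin.castSucc_succ])) i
  zero := s.zero.of_iso (eqToIso (by rw [show (0 : Fin (n+2)) = (0 : Fin (n+1)).castSucc by simp, Fin.snoc_castSucc]))
  top := eqToIso (by rw [Fin.snoc_last])
  adm i := by
    induction i using Fin.lastCases with
    | last =>
        simp only [Fin.lastCases_last]
        refine ⟨Q, eqToHom (by simp [Fin.succ_last]) ≫ d, ?_⟩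
        have h := aux_E_conj Ex hE
          (eqToIso (show (Fin.snoc s.obj Z : Fin (n+2) → C) (Fin.last n).castSucc = s.obj (Fin.last n) by rw [Fin.snoc_castSucc]) ≪≫ s.top)
          (eqToIso (show Z = (Fin.snoc s.obj Z : Fin (n+2) → C) (Fin.last n).succ by simp [Fin.succ_last]))
        simpa using h
    | cast j =>
        simp only [Fin.lastCases_castSucc]
        obtain ⟨Qj, dj, hEj, _⟩ := s.simpleFactor j
        refine ⟨Qj, eqToHom (by simp [Fin.succ_castSucc, -Fin.castSucc_succ]) ≫ dj, ?_⟩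
        have h := aux_E_conj Ex hEj
          (eqToIso (show (Fin.snoc s.obj Z : Fin (n+2) → C) (j.castSucc).castSucc = s.obj j.castSucc by rw [Fin.snoc_castSucc]))
          (eqToIso (show s.obj j.succ = (Fin.snoc s.obj Z : Fin (n+2) → C) j.castSucc.succ by simp [Fin.succ_castSucc, -Fin.castSucc_succ]))
        simpa using h
  simpleFactor i := by
    induction i using Fin.lastCases with
    | last =>
        simp only [Fin.lastCases_last]
        refine ⟨Q, eqToHom (by simp [Fin.succ_last]) ≫ d, ?_, hQ⟩
        have h := aux_E_conj Ex hE
          (eqToIso (show (Fin.snoc s.obj Z : Fin (n+2) → C) (Fin.last n).castSucc = s.obj (Fin.last n) by rw [Fin.snoc_castSucc]) ≪≫ s.top)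
          (eqToIso (show Z = (Fin.snoc s.obj Z : Fin (n+2) → C) (Fin.last n).succ by simp [Fin.succ_last]))
        simpa using h
    | cast j =>
        simp only [Fin.lastCases_castSucc]
        obtain ⟨Qj, dj, hEj, hSj⟩ := s.simpleFactor j
        refine ⟨Qj, eqToHom (by simp [Fin.succ_castSucc, -Fin.castSucc_succ]) ≫ dj, ?_, hSj⟩
        have h := aux_E_conj Ex hEj
          (eqToIso (show (Fin.snoc s.obj Z : Fin (n+2) → C) (j.castSucc).castSucc = s.obj j.castSucc by rw [Fin.snoc_castSucc]))
          (eqToIso (show s.obj j.succ = (Fin.snoc s.obj Z : Fin (n+2) → C) j.castSucc.succ by simp [Fin.succ_castSucc, -Fin.castSucc_succ]))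
        simpa using h

end AuxJH

lemma auxKey (Ex : ExactStructure C) :
    ∀ (m : ℕ) {X Y Z : C} (i : X ⟶ Z) (p : Z ⟶ Y), Ex.E i p →
      ∀ (n : ℕ), Nonempty (CompSeries Ex X n) → Nonempty (CompSeries Ex Y m) →
        Nonempty (CompSeries Ex Z (n + m)) := by
  intro m
  induction m with
  | zero =>
      intro X Y Z i p hip n hX hY
      obtain ⟨sX⟩ := hX
      obtain ⟨tY⟩ := hY
      have hY0 : IsZero Y := tY.zero.of_iso
        (tY.top.symm ≪≫ eqToIso (congrArg tY.obj (by simp)))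
      have hp : p = 0 := hY0.eq_of_tgt p 0
      have hik : IsLimit (KernelFork.ofι i (Ex.pair hip).w) := (Ex.pair hip).isKernel.some
      have hid : IsLimit (KernelFork.ofι (𝟙 Z) (show 𝟙 Z ≫ p = 0 by rw [hp, comp_zero])) :=
        KernelFork.IsLimit.ofι _ _ (fun {W} g _ => g)
          (fun {W} g _ => Category.comp_id g)
          (fun {W} g _ mm hmm => by simpa using hmm)
      exact ⟨auxTransfer Ex (hik.conePointUniqueUpToIso hid) sX⟩
  | succ m IH =>
      intro X Y Z i p hip n hX hY
      obtain ⟨sX⟩ := hX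
      obtain ⟨tY⟩ := hY
      set Ym := tY.obj (Fin.last m).castSucc with hYm
      obtain ⟨Q, dQ, hEtop, hQ⟩ := tY.simpleFactor (Fin.last m)
      have eY : tY.obj (Fin.last m).succ ≅ Y :=
        eqToIso (congrArg tY.obj (Fin.succ_last m)) ≪≫ tY.top
      set j : Ym ⟶ Y := tY.map (Fin.last m) ≫ eY.hom with hj
      set d : Y ⟶ Q := eY.inv ≫ dQ with hd
      have hEj : Ex.E j d := by
        have h := aux_E_conj Ex hEtop (Iso.refl _) eY
        simpa using h
      obtain ⟨A, f, e, w, ⟨pbLim⟩, X₀, i₀, hE₀⟩ := Ex.pullback_admEpi p j ⟨X, i, hip⟩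
      -- basic kernel limits
      have hik : IsLimit (KernelFork.ofι i (Ex.pair hip).w) := (Ex.pair hip).isKernel.some
      have hjk : IsLimit (KernelFork.ofι j (Ex.pair hEj).w) := (Ex.pair hEj).isKernel.some
      have hi₀ : IsLimit (KernelFork.ofι i₀ (Ex.pair hE₀).w) := (Ex.pair hE₀).isKernel.some
      have hjmono : Mono j := ⟨fun {T} a b hab => Fork.IsLimit.hom_ext hjk (by simpa using hab)⟩
      have himono : Mono i := ⟨fun {T} a b hab => Fork.IsLimit.hom_ext hik (by simpa using hab)⟩
      have hfmono : Mono f := by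
        constructor
        intro T a b hab
        apply PullbackCone.IsLimit.hom_ext pbLim
        · exact hab
        · have h2 : (a ≫ e) ≫ j = (b ≫ e) ≫ j := by
            rw [Category.assoc, Category.assoc, ← w, ← Category.assoc, hab, Category.assoc]
          haveI := hjmono
          exact (cancel_mono j).mp h2
      -- the induced map u : X ⟶ A, a kernel of e
      obtain ⟨u, hu_f, hu_e⟩ := PullbackCone.IsLimit.lift' pbLim i 0
        (by rw [(Ex.pair hip).w, zero_comp])
      simp only [PullbackCone.mk_fst] at hu_f
      simp only [PullbackCone.mk_snd] at hu_e
      have humono : Mono u := by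
        haveI : Mono (u ≫ f) := by rw [hu_f]; exact himono
        exact mono_of_mono u f
      have hlift : ∀ {W : C} (g : W ⟶ A), g ≫ e = 0 → ∃ l : W ⟶ X, l ≫ u = g := by
        intro W g hg
        obtain ⟨l, hl⟩ := KernelFork.IsLimit.lift' hik (g ≫ f)
          (by rw [Category.assoc, w, ← Category.assoc, hg, zero_comp])
        simp only [Fork.ι_ofι] at hl
        refine ⟨l, ?_⟩
        apply PullbackCone.IsLimit.hom_ext pbLim
        · exact (Category.assoc _ _ _).trans ((congrArg (fun t => l ≫ t) hu_f).trans hl)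
        · exact (Category.assoc _ _ _).trans ((congrArg (fun t => l ≫ t) hu_e).trans ((comp_zero).trans hg.symm))
      have hulim : IsLimit (KernelFork.ofι u hu_e) :=
        KernelFork.IsLimit.ofι u hu_e
          (fun {W} g hg => (hlift g hg).choose)
          (fun {W} g hg => (hlift g hg).choose_spec)
          (fun {W} g hg mm hmm => by
            haveI := humono
            rw [← cancel_mono u, hmm, (hlift g hg).choose_spec])
      have hEu : Ex.E u e := by
        refine Ex.iso_closed (hi₀.conePointUniqueUpToIso hulim) (Iso.refl A) (Iso.refl Ym)
          hE₀ ?_ (by exact (Category.comp_id _).trans (Category.id_comp _).symm)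
        exact (Category.comp_id _).trans (IsLimit.conePointUniqueUpToIso_hom_comp hi₀ hulim WalkingParallelPair.zero).symm
      -- f is a kernel of q := p ≫ d
      obtain ⟨K, k, hkq⟩ := Ex.admEpi_comp p d ⟨X, i, hip⟩ ⟨Ym, j, hEj⟩
      have hkk : IsLimit (KernelFork.ofι k (Ex.pair hkq).w) := (Ex.pair hkq).isKernel.some
      have hwfq : f ≫ (p ≫ d) = 0 := by
        rw [← Category.assoc, w, Category.assoc, (Ex.pair hEj).w, comp_zero]
      have hflift : ∀ {W : C} (g : W ⟶ Z), g ≫ (p ≫ d) = 0 → ∃ l : W ⟶ A, l ≫ f = g := by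
        intro W g hg
        obtain ⟨l', hl'⟩ := KernelFork.IsLimit.lift' hjk (g ≫ p)
          (by rw [Category.assoc]; exact hg)
        simp only [Fork.ι_ofι] at hl'
        obtain ⟨l, hlf, hle⟩ := PullbackCone.IsLimit.lift' pbLim g l' hl'.symm
        exact ⟨l, hlf⟩
      have hflim : IsLimit (KernelFork.ofι f hwfq) :=
        KernelFork.IsLimit.ofι f hwfq
          (fun {W} g hg => (hflift g hg).choose)
          (fun {W} g hg => (hflift g hg).choose_spec)
          (fun {W} g hg mm hmm => by
            haveI := hfmono
            rw [← cancel_mono f, hmm, (hflift g hg).choose_spec])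
      have hEf : Ex.E f (p ≫ d) := by
        refine Ex.iso_closed (hkk.conePointUniqueUpToIso hflim) (Iso.refl Z) (Iso.refl Q)
          hkq ?_ (by simp)
        simpa using (IsLimit.conePointUniqueUpToIso_hom_comp hkk hflim WalkingParallelPair.zero).symm
      -- apply the induction hypothesis and extend
      obtain ⟨sA⟩ := IH u e hEu n ⟨sX⟩ ⟨auxTrunc Ex tY⟩
      exact ⟨auxSnoc Ex sA f (p ≫ d) hEf hQ⟩

/-- In an `E`-finite Jordan-Hölder exact category the Jordan-Hölder length is additive
on admissible short exact sequences, and is monotone along admissible subobjects. -/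
theorem stmt18 (Ex : ExactStructure C) (hJH : JordanHolder Ex)
    (hfin : ∀ X : C, ∃ n : ℕ, Nonempty (CompSeries Ex X n)) :
    (∀ ⦃X Y Z : C⦄ (i : X ⟶ Z) (p : Z ⟶ Y), Ex.E i p →
      ∀ (n m : ℕ), Nonempty (CompSeries Ex X n) → Nonempty (CompSeries Ex Y m) →
        Nonempty (CompSeries Ex Z (n + m))) ∧
    (∀ ⦃X Y : C⦄ (ι : X ⟶ Y), Ex.AdmMono ι →
      ∀ (n m : ℕ), Nonempty (CompSeries Ex X n) → Nonempty (CompSeries Ex Y m) →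
        n ≤ m) := by
  constructor
  · intro X Y Z i p h n m hX hY
    exact auxKey Ex m i p h n hX hY
  · intro X Y iota hiota n m hX hY
    obtain ⟨Q, d, hd⟩ := hiota
    obtain ⟨k, hQ⟩ := hfin Q
    obtain ⟨sY'⟩ := auxKey Ex k iota d hd n hX hQ
    obtain ⟨sY⟩ := hY
    have := (hJH Y (n + k) m sY' sY).1
    omega
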